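/- Every sequence of expansions producing a partial cube H from the one-vertex graph K_1 has the same length, namely the number of Θ-classes of H (equivalently, the number of equivalence classes of the Djoković–Winkler relation on the edges of H). -/

import Mathlib

open SimpleGraph

/-- The hypercube graph `Q_d` on `{0,1}^d`: two vertices are adjacent iff they
differ in exactly one coordinate. -/
def hypercubeGraph (d : ℕ) : SimpleGraph (Fin d → Bool) where
  Adj x y := hammingDist x y = 1
  symm := by
    constructor
    intro x y h
    rwa [hammingDist_comm]
  loopless := by
    constructor
    intro x h
    simp [hammingDist_self] at h

/-- A partial cube: a connected simple graph admitting an isometric embedding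
into some hypercube. -/
def IsPartialCube {V : Type} (G : SimpleGraph V) : Prop :=
  G.Connected ∧
    ∃ (d : ℕ) (φ : V → (Fin d → Bool)), Function.Injective φ ∧
      ∀ v w : V, (hypercubeGraph d).dist (φ v) (φ w) = G.dist v w

/-- A subgraph is isometric if distances within it coincide with distances in
the ambient graph. -/
def IsIsometricSubgraph {V : Type} {G : SimpleGraph V} (G' : G.Subgraph) : Prop :=
  ∀ u v : G'.verts, G'.coe.dist u v = G.dist u.val v.val

/-- The expansion graph of `G` with respect to two subgraphs `G₁, G₂`: take
disjoint copies of `G₁` and `G₂` and join the two copies of each vertex of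
`G₁ ∩ G₂` by a matching edge. -/
def expansionGraph {V : Type} {G : SimpleGraph V} (G₁ G₂ : G.Subgraph) :
    SimpleGraph (↥G₁.verts ⊕ ↥G₂.verts) where
  Adj a b :=
    match a, b with
    | Sum.inl u, Sum.inl v => G₁.Adj u v
    | Sum.inr u, Sum.inr v => G₂.Adj u v
    | Sum.inl u, Sum.inr v => (u : V) = (v : V)
    | Sum.inr u, Sum.inl v => (u : V) = (v : V)
  symm := by
    constructor
    rintro (u | u) (v | v) h
    · exact G₁.adj_symm h
    · exact h.symm
    · exact h.symm
    · exact G₂.adj_symm h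
  loopless := by
    constructor
    rintro (u | u) h
    · exact G.loopless.irrefl _ (G₁.adj_sub h)
    · exact G.loopless.irrefl _ (G₂.adj_sub h)

/-- `H` is the expansion of `G` with respect to the subgraphs `G₁` and `G₂`:
they are isometric, cover `G` (vertices and edges), have non-empty
intersection, and `H` is isomorphic to the resulting expansion graph. -/
structure IsExpansionWrt {V W : Type} (H : SimpleGraph W) (G : SimpleGraph V)
    (G₁ G₂ : G.Subgraph) : Prop where
  isometric₁ : IsIsometricSubgraph G₁
  isometric₂ : IsIsometricSubgraph G₂
  covers : G₁ ⊔ G₂ = ⊤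
  inter_nonempty : (G₁.verts ∩ G₂.verts).Nonempty
  iso : Nonempty (H ≃g expansionGraph G₁ G₂)

/-- `H` is an expansion of `G` (with respect to some admissible pair of
subgraphs). -/
def IsExpansionOf {V W : Type} (H : SimpleGraph W) (G : SimpleGraph V) : Prop :=
  ∃ G₁ G₂ : G.Subgraph, IsExpansionWrt H G G₁ G₂

/-- The Djoković–Winkler relation `Θ` on (unordered) edges: `e = xy` and
`f = uv` are related iff `d(x,u) + d(y,v) ≠ d(x,v) + d(y,u)`. -/
def DWRel {V : Type} (G : SimpleGraph V) (e f : Sym2 V) : Prop :=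
  ∃ x y u v : V, e = s(x, y) ∧ f = s(u, v) ∧
    G.dist x u + G.dist y v ≠ G.dist x v + G.dist y u

/-- A `Θ`-class of `G`: the set of all edges of `G` related to some fixed edge
`e` of `G` by the Djoković–Winkler relation. -/
def IsThetaClass {V : Type} (G : SimpleGraph V) (C : Set (Sym2 V)) : Prop :=
  ∃ e ∈ G.edgeSet, C = {f | f ∈ G.edgeSet ∧ DWRel G e f}

/-- Graphs obtainable from the one-vertex graph `K₁` by a sequence of exactly
`n` expansions. -/
inductive ObtainableByExpansionsIn : ∀ {V : Type}, SimpleGraph V → ℕ → Prop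
  | single {V : Type} (G : SimpleGraph V) (h : ∃ v : V, ∀ w : V, w = v) :
      ObtainableByExpansionsIn G 0
  | expand {V W : Type} {G : SimpleGraph V} {H : SimpleGraph W} {n : ℕ}
      (hG : ObtainableByExpansionsIn G n) (hH : IsExpansionOf H G) :
      ObtainableByExpansionsIn H (n + 1)

def bn (a b : Bool) : ℕ := if a = b then 0 else 1

lemma hamming_eq_sum {d : ℕ} (x y : Fin d → Bool) :
    hammingDist x y = ∑ i, bn (x i) (y i) := by
  rw [hammingDist, Finset.card_filter]
  exact Finset.sum_congr rfl fun i _ => by by_cases h : x i = y i <;> simp [bn, h]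

lemma hamming_one_exists {d : ℕ} {x y : Fin d → Bool} (h : hammingDist x y = 1) :
    ∃ i, x i ≠ y i ∧ ∀ j, j ≠ i → x j = y j := by
  rw [hammingDist] at h
  obtain ⟨i, hi⟩ := Finset.card_eq_one.mp h
  have hmem : ∀ j : Fin d, x j ≠ y j ↔ j = i := by
    intro j
    rw [← Finset.mem_singleton, ← hi]
    simp
  exact ⟨i, (hmem i).mpr rfl, fun j hj => by
    by_contra hc; exact hj ((hmem j).mp hc)⟩

lemma fourpoint_ne {d : ℕ} {x y u v : Fin d → Bool} {i : Fin d}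
    (hxy : x i ≠ y i) (hxyo : ∀ j, j ≠ i → x j = y j)
    (huv : u i ≠ v i) (huvo : ∀ j, j ≠ i → u j = v j) :
    hammingDist x u + hammingDist y v ≠ hammingDist x v + hammingDist y u := by
  simp only [hamming_eq_sum]
  rw [← Finset.sum_add_distrib, ← Finset.sum_add_distrib,
    ← Finset.add_sum_erase _ (fun c => bn (x c) (u c) + bn (y c) (v c)) (Finset.mem_univ i),
    ← Finset.add_sum_erase _ (fun c => bn (x c) (v c) + bn (y c) (u c)) (Finset.mem_univ i)]
  have hrest : ∑ c ∈ Finset.univ.erase i, (bn (x c) (u c) + bn (y c) (v c)) =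
      ∑ c ∈ Finset.univ.erase i, (bn (x c) (v c) + bn (y c) (u c)) := by
    refine Finset.sum_congr rfl fun c hc => ?_
    have hci : c ≠ i := (Finset.mem_erase.mp hc).1
    rw [hxyo c hci, huvo c hci]
  rw [hrest]
  have hne : bn (x i) (u i) + bn (y i) (v i) ≠ bn (x i) (v i) + bn (y i) (u i) := by
    revert hxy huv
    cases x i <;> cases y i <;> cases u i <;> cases v i <;> decide
  omega

lemma fourpoint_eq {d : ℕ} {x y u v : Fin d → Bool} {i j : Fin d} (hij : i ≠ j)
    (hxyo : ∀ k, k ≠ i → x k = y k)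
    (huvo : ∀ k, k ≠ j → u k = v k) :
    hammingDist x u + hammingDist y v = hammingDist x v + hammingDist y u := by
  simp only [hamming_eq_sum]
  rw [← Finset.sum_add_distrib, ← Finset.sum_add_distrib]
  refine Finset.sum_congr rfl fun c _ => ?_
  have : x c = y c ∨ u c = v c := by
    by_cases hci : c = i
    · exact Or.inr (huvo c (fun h => hij (hci ▸ h ▸ rfl)))
    · exact Or.inl (hxyo c hci)
  rcases this with h | h
  · rw [h]; exact add_comm _ _
  · rw [h]

def DiffAt {V : Type} {d : ℕ} (φ : V → Fin d → Bool) (e : Sym2 V) (c : Fin d) : Prop :=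
  Sym2.lift ⟨fun x y => φ x c ≠ φ y c, fun x y => by simp [ne_comm]⟩ e




section
variable {V : Type} {G : SimpleGraph V} {d : ℕ} {φ : V → Fin d → Bool}
  (hdist : ∀ v w, hammingDist (φ v) (φ w) = G.dist v w)

include hdist

lemma edge_unique_coord {x y : V} (hadj : G.Adj x y) :
    ∃ i, (φ x i ≠ φ y i ∧ ∀ j, j ≠ i → φ x j = φ y j) := by
  have h1 : hammingDist (φ x) (φ y) = 1 := by
    rw [hdist]; exact SimpleGraph.dist_eq_one_iff_adj.mpr hadj
  exact hamming_one_exists h1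

lemma diffAt_unique {x y : V} (hadj : G.Adj x y) {c c' : Fin d}
    (h : DiffAt φ s(x,y) c) (h' : DiffAt φ s(x,y) c') : c = c' := by
  obtain ⟨i, hi, hio⟩ := edge_unique_coord hdist hadj
  simp only [DiffAt, Sym2.lift_mk] at h h'
  by_contra hne
  rcases eq_or_ne c i with rfl | hc
  · exact h' (hio c' (fun hh => hne hh.symm))
  · exact h (hio c hc)

lemma dw_iff {x y u v : V} (hxy : G.Adj x y) (huv : G.Adj u v) :
    DWRel G s(x,y) s(u,v) ↔ ∃ c, DiffAt φ s(x,y) c ∧ DiffAt φ s(u,v) c := by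
  obtain ⟨i, hi, hio⟩ := edge_unique_coord hdist hxy
  obtain ⟨j, hj, hjo⟩ := edge_unique_coord hdist huv
  constructor
  · rintro ⟨x', y', u', v', he, hf, hne⟩
    rcases eq_or_ne i j with rfl | hij
    · exact ⟨i, by simpa [DiffAt] using hi, by simpa [DiffAt] using hj⟩
    · exfalso
      apply hne
      -- reduce to hamming
      have key : ∀ a b p q : V, (s(a,b) = s(x,y)) → (s(p,q) = s(u,v)) →
          G.dist a p + G.dist b q = G.dist a q + G.dist b p := by
        intro a b p q hab hpq
        rw [← hdist, ← hdist, ← hdist, ← hdist]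
        rw [Sym2.eq_iff] at hab hpq
        rcases hab with ⟨rfl, rfl⟩ | ⟨rfl, rfl⟩ <;> rcases hpq with ⟨rfl, rfl⟩ | ⟨rfl, rfl⟩
        · exact fourpoint_eq hij hio hjo
        · have := fourpoint_eq hij hio (fun k hk => (hjo k hk).symm)
          omega
        · have := fourpoint_eq hij (fun k hk => (hio k hk).symm) hjo
          omega
        · have := fourpoint_eq hij (fun k hk => (hio k hk).symm) (fun k hk => (hjo k hk).symm)
          omega
      exact key x' y' u' v' he.symm hf.symm
  · rintro ⟨c, hc, hc'⟩
    have hci : c = i := by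
      by_contra h
      exact (by simpa [DiffAt] using hc : φ x c ≠ φ y c) (hio c h)
    have hcj : c = j := by
      by_contra h
      exact (by simpa [DiffAt] using hc' : φ u c ≠ φ v c) (hjo c h)
    subst hci
    refine ⟨x, y, u, v, rfl, rfl, ?_⟩
    rw [← hdist, ← hdist, ← hdist, ← hdist]
    exact fourpoint_ne hi hio (hcj ▸ hj) (hcj ▸ hjo)

lemma theta_card_eq :
    Nat.card {C : Set (Sym2 V) // IsThetaClass G C}
      = Nat.card {c : Fin d // ∃ e ∈ G.edgeSet, DiffAt φ e c} := by
  symm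
  apply Nat.card_eq_of_bijective
    (f := fun c => (⟨{f | f ∈ G.edgeSet ∧ DiffAt φ f c.val}, by
      obtain ⟨c, e, he, hec⟩ := c
      refine ⟨e, he, ?_⟩
      ext f
      simp only [Set.mem_setOf_eq, and_congr_right_iff]
      intro hf
      induction e with
      | _ x y =>
        induction f with
        | _ u v =>
          rw [dw_iff hdist (G.mem_edgeSet.mp he) (G.mem_edgeSet.mp hf)]
          constructor
          · intro h; exact ⟨c, hec, h⟩
          · rintro ⟨c', hc', h⟩
            have hcc : c' = c := diffAt_unique hdist (G.mem_edgeSet.mp he) hc' hec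
            exact hcc ▸ h ⟩
      : {C : Set (Sym2 V) // IsThetaClass G C}))
    ?_
  constructor
  · rintro ⟨c₁, e₁, he₁, hd₁⟩ ⟨c₂, e₂, he₂, hd₂⟩ h
    simp only [Subtype.mk_eq_mk] at h ⊢
    have : e₁ ∈ {f | f ∈ G.edgeSet ∧ DiffAt φ f c₂} := by
      rw [← h]; exact ⟨he₁, hd₁⟩
    induction e₁ with
    | _ x y => exact diffAt_unique hdist (G.mem_edgeSet.mp he₁) hd₁ this.2
  · rintro ⟨C, e, he, rfl⟩
    induction e with
    | _ x y =>
      have hadj := G.mem_edgeSet.mp he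
      obtain ⟨i, hi, hio⟩ := edge_unique_coord hdist hadj
      have hde : DiffAt φ s(x,y) i := by simpa [DiffAt] using hi
      refine ⟨⟨i, s(x,y), he, hde⟩, ?_⟩
      simp only [Subtype.mk_eq_mk]
      ext f
      simp only [Set.mem_setOf_eq, and_congr_right_iff]
      intro hf
      induction f with
      | _ u v =>
        rw [dw_iff hdist hadj (G.mem_edgeSet.mp hf)]
        constructor
        · intro h; exact ⟨i, hde, h⟩
        · rintro ⟨c', hc', h⟩
          have hcc : c' = i := diffAt_unique hdist hadj hc' hde
          exact hcc ▸ h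
end

section Expansion

variable {V : Type} {G : SimpleGraph V} {G₁ G₂ : G.Subgraph}

/-- projection from the expansion vertex type back to `V`. -/
def expPr (G₁ G₂ : G.Subgraph) : (↥G₁.verts ⊕ ↥G₂.verts) → V :=
  Sum.elim Subtype.val Subtype.val

def inlHom (G₁ G₂ : G.Subgraph) : G₁.coe →g expansionGraph G₁ G₂ :=
  ⟨Sum.inl, fun {x y} hxy => hxy⟩

def inrHom (G₁ G₂ : G.Subgraph) : G₂.coe →g expansionGraph G₁ G₂ :=
  ⟨Sum.inr, fun {x y} hxy => hxy⟩

lemma hamming_cons {d : ℕ} (s t : Bool) (x y : Fin d → Bool) :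
    hammingDist (Fin.cons s x : Fin (d+1) → Bool) (Fin.cons t y) = bn s t + hammingDist x y := by
  rw [hamming_eq_sum (Fin.cons s x : Fin (d+1) → Bool) (Fin.cons t y), hamming_eq_sum x y,
    Fin.sum_univ_succ]
  simp

lemma walk_proj_le (hconn : G.Connected) {a b : ↥G₁.verts ⊕ ↥G₂.verts}
    (w : (expansionGraph G₁ G₂).Walk a b) :
    G.dist (expPr G₁ G₂ a) (expPr G₁ G₂ b) ≤ w.length := by
  induction w with
  | nil => simp
  | @cons a c b h p ih =>
    rw [SimpleGraph.Walk.length_cons]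
    have step : G.Adj (expPr G₁ G₂ a) (expPr G₁ G₂ c) ∨ expPr G₁ G₂ a = expPr G₁ G₂ c := by
      cases a with
      | inl u =>
        cases c with
        | inl u' => exact Or.inl (G₁.adj_sub h)
        | inr v' => exact Or.inr h
      | inr u =>
        cases c with
        | inl u' => exact Or.inr h
        | inr v' => exact Or.inl (G₂.adj_sub h)
    rcases step with hadj | heq
    · have htri := hconn.dist_triangle (u := expPr G₁ G₂ a) (v := expPr G₁ G₂ c)
        (w := expPr G₁ G₂ b)
      have h1 : G.dist (expPr G₁ G₂ a) (expPr G₁ G₂ c) = 1 :=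
        SimpleGraph.dist_eq_one_iff_adj.mpr hadj
      omega
    · rw [heq]; omega

lemma walk_cross_le (hconn : G.Connected) {a b : ↥G₁.verts ⊕ ↥G₂.verts}
    (w : (expansionGraph G₁ G₂).Walk a b) :
    a.isLeft → b.isRight → G.dist (expPr G₁ G₂ a) (expPr G₁ G₂ b) + 1 ≤ w.length := by
  induction w with
  | nil =>
    intro ha hb
    rw [Sum.isLeft_iff] at ha
    obtain ⟨x, rfl⟩ := ha
    simp at hb
  | @cons a c b h p ih =>
    intro ha hb
    rw [SimpleGraph.Walk.length_cons]
    cases a with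
    | inr u => simp at ha
    | inl u =>
      cases c with
      | inl u' =>
        have h2 := ih (by simp) hb
        have hadj : G.Adj (u : V) (u' : V) := G₁.adj_sub h
        have htri := hconn.dist_triangle (u := (u : V)) (v := (u' : V))
          (w := expPr G₁ G₂ b)
        have h1 : G.dist (u : V) (u' : V) = 1 := SimpleGraph.dist_eq_one_iff_adj.mpr hadj
        simp only [expPr, Sum.elim_inl] at h2 htri ⊢
        omega
      | inr v' =>
        have h2 := walk_proj_le hconn p
        have heq : expPr G₁ G₂ (Sum.inl u) = expPr G₁ G₂ (Sum.inr v') := h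
        rw [heq]
        omega

lemma exists_walk_inl (hconn : G.Connected) (h1 : IsIsometricSubgraph G₁)
    (u u' : ↥G₁.verts) :
    ∃ w : (expansionGraph G₁ G₂).Walk (Sum.inl u) (Sum.inl u'),
      w.length = G.dist (u : V) (u' : V) := by
  rcases eq_or_ne u u' with rfl | hne
  · exact ⟨SimpleGraph.Walk.nil, by simp [SimpleGraph.dist_self]⟩
  · have hvne : (u : V) ≠ (u' : V) := fun h => hne (Subtype.ext h)
    have hpos : 0 < G.dist (u : V) (u' : V) := hconn.pos_dist_of_ne hvne
    have hd : G₁.coe.dist u u' = G.dist (u : V) (u' : V) := h1 u u'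
    have hne0 : G₁.coe.dist u u' ≠ 0 := by omega
    obtain ⟨p, hp⟩ := (SimpleGraph.Reachable.of_dist_ne_zero hne0).exists_walk_length_eq_dist
    exact ⟨(p.map (inlHom G₁ G₂)).copy rfl rfl,
      (SimpleGraph.Walk.length_copy _ _ _).trans ((SimpleGraph.Walk.length_map _ _).trans (hp.trans hd))⟩

lemma exists_walk_inr (hconn : G.Connected) (h2 : IsIsometricSubgraph G₂)
    (v v' : ↥G₂.verts) :
    ∃ w : (expansionGraph G₁ G₂).Walk (Sum.inr v) (Sum.inr v'),
      w.length = G.dist (v : V) (v' : V) := by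
  rcases eq_or_ne v v' with rfl | hne
  · exact ⟨SimpleGraph.Walk.nil, by simp [SimpleGraph.dist_self]⟩
  · have hvne : (v : V) ≠ (v' : V) := fun h => hne (Subtype.ext h)
    have hpos : 0 < G.dist (v : V) (v' : V) := hconn.pos_dist_of_ne hvne
    have hd : G₂.coe.dist v v' = G.dist (v : V) (v' : V) := h2 v v'
    have hne0 : G₂.coe.dist v v' ≠ 0 := by omega
    obtain ⟨p, hp⟩ := (SimpleGraph.Reachable.of_dist_ne_zero hne0).exists_walk_length_eq_dist
    exact ⟨(p.map (inrHom G₁ G₂)).copy rfl rfl,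
      (SimpleGraph.Walk.length_copy _ _ _).trans ((SimpleGraph.Walk.length_map _ _).trans (hp.trans hd))⟩

lemma cross_vertex (hconn : G.Connected) (hcov : G₁ ⊔ G₂ = ⊤)
    {a b : V} (q : G.Walk a b) :
    a ∈ G₁.verts → b ∈ G₂.verts →
      ∃ w, w ∈ G₁.verts ∧ w ∈ G₂.verts ∧ G.dist a w + G.dist w b ≤ q.length := by
  induction q with
  | nil => intro ha hb; exact ⟨_, ha, hb, by simp [SimpleGraph.dist_self]⟩
  | @cons a c b h p ih =>
    intro ha hb
    have hadj : G₁.Adj a c ∨ G₂.Adj a c := by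
      have h2 : (G₁ ⊔ G₂).Adj a c := by rw [hcov]; exact h
      exact h2
    rcases hadj with h1 | h2
    · have hc : c ∈ G₁.verts := h1.snd_mem
      obtain ⟨w, hw1, hw2, hw3⟩ := ih hc hb
      have htri := hconn.dist_triangle (u := a) (v := c) (w := w)
      have hd1 : G.dist a c = 1 := SimpleGraph.dist_eq_one_iff_adj.mpr h
      rw [SimpleGraph.Walk.length_cons]
      exact ⟨w, hw1, hw2, by omega⟩
    · have ha2 : a ∈ G₂.verts := h2.fst_mem
      refine ⟨a, ha, ha2, ?_⟩
      have := SimpleGraph.dist_le (SimpleGraph.Walk.cons h p)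
      simpa [SimpleGraph.dist_self] using this

lemma exists_walk_cross (hconn : G.Connected) (h1 : IsIsometricSubgraph G₁)
    (h2 : IsIsometricSubgraph G₂) (hcov : G₁ ⊔ G₂ = ⊤)
    (u : ↥G₁.verts) (v : ↥G₂.verts) :
    ∃ w : (expansionGraph G₁ G₂).Walk (Sum.inl u) (Sum.inr v),
      w.length ≤ G.dist (u : V) (v : V) + 1 := by
  obtain ⟨q, hq⟩ := hconn.exists_walk_length_eq_dist (u : V) (v : V)
  obtain ⟨w, hw1, hw2, hw3⟩ := cross_vertex hconn hcov q u.2 v.2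
  obtain ⟨p1, hp1⟩ := exists_walk_inl (G₂ := G₂) hconn h1 u ⟨w, hw1⟩
  obtain ⟨p2, hp2⟩ := exists_walk_inr (G₁ := G₁) hconn h2 ⟨w, hw2⟩ v
  have hadj : (expansionGraph G₁ G₂).Adj (Sum.inl ⟨w, hw1⟩) (Sum.inr ⟨w, hw2⟩) := rfl
  refine ⟨p1.append (SimpleGraph.Walk.cons hadj p2), ?_⟩
  rw [SimpleGraph.Walk.length_append, SimpleGraph.Walk.length_cons, hp1, hp2]
  rw [hq] at hw3
  have e1 : ((⟨w, hw1⟩ : ↥G₁.verts) : V) = w := rfl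
  have e2 : ((⟨w, hw2⟩ : ↥G₂.verts) : V) = w := rfl
  simp only [e1, e2]
  omega

lemma edist_inl_inl (hconn : G.Connected) (h1 : IsIsometricSubgraph G₁)
    (u u' : ↥G₁.verts) :
    (expansionGraph G₁ G₂).dist (Sum.inl u) (Sum.inl u') = G.dist (u : V) (u' : V) := by
  obtain ⟨p, hp⟩ := exists_walk_inl (G₂ := G₂) hconn h1 u u'
  refine le_antisymm (hp ▸ SimpleGraph.dist_le p) ?_
  obtain ⟨q, hq⟩ := SimpleGraph.Reachable.exists_walk_length_eq_dist ⟨p⟩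
  rw [← hq]
  exact walk_proj_le hconn q

lemma edist_inr_inr (hconn : G.Connected) (h2 : IsIsometricSubgraph G₂)
    (v v' : ↥G₂.verts) :
    (expansionGraph G₁ G₂).dist (Sum.inr v) (Sum.inr v') = G.dist (v : V) (v' : V) := by
  obtain ⟨p, hp⟩ := exists_walk_inr (G₁ := G₁) hconn h2 v v'
  refine le_antisymm (hp ▸ SimpleGraph.dist_le p) ?_
  obtain ⟨q, hq⟩ := SimpleGraph.Reachable.exists_walk_length_eq_dist ⟨p⟩
  rw [← hq]
  exact walk_proj_le hconn q

lemma edist_inl_inr (hconn : G.Connected) (h1 : IsIsometricSubgraph G₁)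
    (h2 : IsIsometricSubgraph G₂) (hcov : G₁ ⊔ G₂ = ⊤)
    (u : ↥G₁.verts) (v : ↥G₂.verts) :
    (expansionGraph G₁ G₂).dist (Sum.inl u) (Sum.inr v) = G.dist (u : V) (v : V) + 1 := by
  obtain ⟨p, hp⟩ := exists_walk_cross hconn h1 h2 hcov u v
  refine le_antisymm (le_trans (SimpleGraph.dist_le p) hp) ?_
  obtain ⟨q, hq⟩ := SimpleGraph.Reachable.exists_walk_length_eq_dist ⟨p⟩
  rw [← hq]
  exact walk_cross_le hconn q (by simp) (by simp)

lemma expansion_connected (hconn : G.Connected) (h1 : IsIsometricSubgraph G₁)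
    (h2 : IsIsometricSubgraph G₂) (hcov : G₁ ⊔ G₂ = ⊤)
    (h0 : (G₁.verts ∩ G₂.verts).Nonempty) :
    (expansionGraph G₁ G₂).Connected := by
  obtain ⟨w₀, hw₁, hw₂⟩ := h0
  have hreach : ∀ a, (expansionGraph G₁ G₂).Reachable a (Sum.inl ⟨w₀, hw₁⟩) := by
    intro a
    cases a with
    | inl u =>
      obtain ⟨p, _⟩ := exists_walk_inl (G₂ := G₂) hconn h1 u ⟨w₀, hw₁⟩
      exact ⟨p⟩
    | inr v =>
      obtain ⟨p, _⟩ := exists_walk_cross hconn h1 h2 hcov ⟨w₀, hw₁⟩ v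
      exact ⟨p.reverse⟩
  haveI : Nonempty (↥G₁.verts ⊕ ↥G₂.verts) := ⟨Sum.inl ⟨w₀, hw₁⟩⟩
  exact ⟨fun a b => (hreach a).trans (hreach b).symm⟩

/-- the embedding of the expansion graph into the next hypercube. -/
def expEmb {d : ℕ} (φ : V → Fin d → Bool) (G₁ G₂ : G.Subgraph) :
    (↥G₁.verts ⊕ ↥G₂.verts) → Fin (d + 1) → Bool :=
  fun a => Fin.cons a.isRight (φ (expPr G₁ G₂ a))

lemma expEmb_injective {d : ℕ} {φ : V → Fin d → Bool} (hinj : Function.Injective φ) :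
    Function.Injective (expEmb φ G₁ G₂) := by
  intro a b h
  have h0 : a.isRight = b.isRight := by
    have := congrFun h 0
    simpa [expEmb] using this
  have hφ : φ (expPr G₁ G₂ a) = φ (expPr G₁ G₂ b) := by
    funext i
    have := congrFun h i.succ
    simpa [expEmb] using this
  have hpr := hinj hφ
  cases a with
  | inl u =>
    cases b with
    | inl u' => exact congrArg Sum.inl (Subtype.ext hpr)
    | inr v' => simp at h0
  | inr v =>
    cases b with
    | inl u' => simp at h0
    | inr v' => exact congrArg Sum.inr (Subtype.ext hpr)

lemma expEmb_isometric {d : ℕ} {φ : V → Fin d → Bool}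
    (hdist : ∀ v w, hammingDist (φ v) (φ w) = G.dist v w)
    (hconn : G.Connected) (h1 : IsIsometricSubgraph G₁)
    (h2 : IsIsometricSubgraph G₂) (hcov : G₁ ⊔ G₂ = ⊤) :
    ∀ a b, hammingDist (expEmb φ G₁ G₂ a) (expEmb φ G₁ G₂ b) =
      (expansionGraph G₁ G₂).dist a b := by
  intro a b
  cases a with
  | inl u =>
    cases b with
    | inl u' =>
      rw [edist_inl_inl hconn h1, expEmb, expEmb, hamming_cons]
      simp [bn, hdist, expPr]
    | inr v' =>
      rw [edist_inl_inr hconn h1 h2 hcov, expEmb, expEmb, hamming_cons]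
      simp [bn, hdist, expPr]
      omega
  | inr v =>
    cases b with
    | inl u' =>
      rw [SimpleGraph.dist_comm (G := expansionGraph G₁ G₂),
        edist_inl_inr hconn h1 h2 hcov, expEmb, expEmb, hamming_cons]
      simp only [bn, expPr, Sum.elim_inl, Sum.elim_inr, Sum.isRight_inl, Sum.isRight_inr]
      show 1 + hammingDist (φ (v : V)) (φ (u' : V)) = G.dist (u' : V) (v : V) + 1
      rw [hdist, G.dist_comm]
      omega
    | inr v' =>
      rw [edist_inr_inr hconn h2, expEmb, expEmb, hamming_cons]
      simp [bn, hdist, expPr]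

end Expansion

section ActiveCard

variable {V : Type} {G : SimpleGraph V} {G₁ G₂ : G.Subgraph}

lemma active_set_eq (hG0 : (G₁.verts ∩ G₂.verts).Nonempty) (hcov : G₁ ⊔ G₂ = ⊤)
    {d : ℕ} (φ : V → Fin d → Bool) :
    {c : Fin (d+1) | ∃ e ∈ (expansionGraph G₁ G₂).edgeSet, DiffAt (expEmb φ G₁ G₂) e c}
      = insert (0 : Fin (d+1))
          (Fin.succ '' {c : Fin d | ∃ e ∈ G.edgeSet, DiffAt φ e c}) := by
  ext c
  simp only [Set.mem_setOf_eq, Set.mem_insert_iff, Set.mem_image]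
  constructor
  · rintro ⟨e, he, hc⟩
    induction e with
    | _ a b =>
      have hadj : (expansionGraph G₁ G₂).Adj a b := (SimpleGraph.mem_edgeSet _).mp he
      simp only [DiffAt, Sym2.lift_mk] at hc
      revert hc
      refine Fin.cases (fun _ => Or.inl rfl) (fun c' hc => Or.inr ⟨c', ?_, rfl⟩) c
      simp only [expEmb, Fin.cons_succ] at hc
      cases a with
      | inl u =>
        cases b with
        | inl u' =>
          exact ⟨s((u : V), (u' : V)), (SimpleGraph.mem_edgeSet _).mpr (G₁.adj_sub hadj),
            by simpa [DiffAt, expPr] using hc⟩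
        | inr v' =>
          exact absurd (congrArg (fun z => φ z c') (hadj : (u : V) = (v' : V))) hc
      | inr v =>
        cases b with
        | inl u' =>
          exact absurd (congrArg (fun z => φ z c') (hadj : (v : V) = (u' : V))) hc
        | inr v' =>
          exact ⟨s((v : V), (v' : V)), (SimpleGraph.mem_edgeSet _).mpr (G₂.adj_sub hadj),
            by simpa [DiffAt, expPr] using hc⟩
  · rintro (rfl | ⟨c', ⟨e, he, hd⟩, rfl⟩)
    · obtain ⟨w₀, hw₁, hw₂⟩ := hG0
      refine ⟨s(Sum.inl ⟨w₀, hw₁⟩, Sum.inr ⟨w₀, hw₂⟩),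
        (SimpleGraph.mem_edgeSet _).mpr rfl, ?_⟩
      simp [DiffAt, expEmb]
    · induction e with
      | _ x y =>
        have hadj : G.Adj x y := (SimpleGraph.mem_edgeSet _).mp he
        have hadj2 : G₁.Adj x y ∨ G₂.Adj x y := by
          have h2 : (G₁ ⊔ G₂).Adj x y := by rw [hcov]; exact hadj
          exact h2
        simp only [DiffAt, Sym2.lift_mk] at hd
        rcases hadj2 with h1 | h2
        · refine ⟨s(Sum.inl ⟨x, h1.fst_mem⟩, Sum.inl ⟨y, h1.snd_mem⟩),
            (SimpleGraph.mem_edgeSet _).mpr h1, ?_⟩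
          simpa [DiffAt, expEmb, expPr] using hd
        · refine ⟨s(Sum.inr ⟨x, h2.fst_mem⟩, Sum.inr ⟨y, h2.snd_mem⟩),
            (SimpleGraph.mem_edgeSet _).mpr h2, ?_⟩
          simpa [DiffAt, expEmb, expPr] using hd

lemma active_card (hG0 : (G₁.verts ∩ G₂.verts).Nonempty) (hcov : G₁ ⊔ G₂ = ⊤)
    {d : ℕ} (φ : V → Fin d → Bool) :
    Nat.card {c : Fin (d+1) // ∃ e ∈ (expansionGraph G₁ G₂).edgeSet,
        DiffAt (expEmb φ G₁ G₂) e c}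
      = Nat.card {c : Fin d // ∃ e ∈ G.edgeSet, DiffAt φ e c} + 1 := by
  have h1 : Nat.card {c : Fin (d+1) // ∃ e ∈ (expansionGraph G₁ G₂).edgeSet,
      DiffAt (expEmb φ G₁ G₂) e c}
      = ({c : Fin (d+1) | ∃ e ∈ (expansionGraph G₁ G₂).edgeSet,
          DiffAt (expEmb φ G₁ G₂) e c}).ncard := Nat.card_coe_set_eq _
  have h2 : Nat.card {c : Fin d // ∃ e ∈ G.edgeSet, DiffAt φ e c}
      = ({c : Fin d | ∃ e ∈ G.edgeSet, DiffAt φ e c}).ncard := Nat.card_coe_set_eq _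
  rw [h1, h2, active_set_eq hG0 hcov φ,
    Set.ncard_insert_of_notMem (by simp [Fin.succ_ne_zero]) (Set.toFinite _),
    Set.ncard_image_of_injective _ (Fin.succ_injective d)]

end ActiveCard


lemma iso_dist {A B : Type} {GA : SimpleGraph A} {GB : SimpleGraph B} (e : GA ≃g GB)
    (v w : A) : GA.dist v w = GB.dist (e v) (e w) := by
  rcases em (GA.Reachable v w) with h | h
  · obtain ⟨p, hp⟩ := h.exists_walk_length_eq_dist
    have hq : GB.Reachable (e v) (e w) := ⟨p.map e.toHom⟩
    obtain ⟨q, hq'⟩ := hq.exists_walk_length_eq_dist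
    apply le_antisymm
    · have := SimpleGraph.dist_le ((q.map e.symm.toHom).copy (e.symm_apply_apply v) (e.symm_apply_apply w))
      simpa [hq'] using this
    · have := SimpleGraph.dist_le (p.map e.toHom)
      simpa [hp] using this
  · have h2 : ¬ GB.Reachable (e v) (e w) := fun ⟨q⟩ =>
      h ⟨(q.map e.symm.toHom).copy (e.symm_apply_apply v) (e.symm_apply_apply w)⟩
    rw [SimpleGraph.dist_eq_zero_of_not_reachable h,
      SimpleGraph.dist_eq_zero_of_not_reachable h2]

lemma iso_connected {A B : Type} {GA : SimpleGraph A} {GB : SimpleGraph B} (e : GA ≃g GB)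
    (h : GB.Connected) : GA.Connected := by
  haveI : Nonempty A := ⟨e.symm h.nonempty.some⟩
  refine ⟨fun a b => ?_⟩
  obtain ⟨q⟩ := h.preconnected (e a) (e b)
  exact ⟨(q.map e.symm.toHom).copy (e.symm_apply_apply a) (e.symm_apply_apply b)⟩


lemma expansion_step {V W : Type} {G : SimpleGraph V} {H : SimpleGraph W}
    (hexp : IsExpansionOf H G) (hconn : G.Connected) {d : ℕ} {φ : V → Fin d → Bool}
    (hinj : Function.Injective φ)
    (hdist : ∀ v w, hammingDist (φ v) (φ w) = G.dist v w) :
    H.Connected ∧ ∃ ψ : W → Fin (d+1) → Bool, Function.Injective ψ ∧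
      (∀ v w, hammingDist (ψ v) (ψ w) = H.dist v w) ∧
      Nat.card {c : Fin (d+1) // ∃ e ∈ H.edgeSet, DiffAt ψ e c}
        = Nat.card {c : Fin d // ∃ e ∈ G.edgeSet, DiffAt φ e c} + 1 := by
  obtain ⟨G₁, G₂, hw⟩ := hexp
  obtain ⟨isoH⟩ := hw.iso
  have h1 := hw.isometric₁
  have h2 := hw.isometric₂
  have hcov := hw.covers
  have h0 := hw.inter_nonempty
  have hEconn := expansion_connected hconn h1 h2 hcov h0
  refine ⟨iso_connected isoH hEconn, fun w => expEmb φ G₁ G₂ (isoH w), ?_, ?_, ?_⟩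
  · exact fun a b hab => isoH.injective (expEmb_injective hinj hab)
  · intro v w
    rw [expEmb_isometric hdist hconn h1 h2 hcov, ← iso_dist isoH]
  · have hsets : ∀ c : Fin (d+1),
        (∃ e ∈ H.edgeSet, DiffAt (fun w => expEmb φ G₁ G₂ (isoH w)) e c) ↔
        (∃ e ∈ (expansionGraph G₁ G₂).edgeSet, DiffAt (expEmb φ G₁ G₂) e c) := by
      intro c
      constructor
      · rintro ⟨e, he, hc⟩
        induction e with
        | _ x y =>
          refine ⟨s(isoH x, isoH y),
            (SimpleGraph.mem_edgeSet _).mpr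
              (isoH.map_adj_iff.mpr ((SimpleGraph.mem_edgeSet _).mp he)), ?_⟩
          simpa [DiffAt] using hc
      · rintro ⟨e', he', hc⟩
        induction e' with
        | _ a b =>
          refine ⟨s(isoH.symm a, isoH.symm b),
            (SimpleGraph.mem_edgeSet _).mpr
              (isoH.symm.map_adj_iff.mpr ((SimpleGraph.mem_edgeSet _).mp he')), ?_⟩
          simpa [DiffAt] using hc
    rw [Nat.card_congr (Equiv.subtypeEquivRight hsets)]
    exact active_card h0 hcov φ

lemma obtainable_struct {V : Type} {G : SimpleGraph V} {n : ℕ}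
    (h : ObtainableByExpansionsIn G n) :
    G.Connected ∧ ∃ (d : ℕ) (φ : V → Fin d → Bool), Function.Injective φ ∧
      (∀ v w, hammingDist (φ v) (φ w) = G.dist v w) ∧
      n = Nat.card {c : Fin d // ∃ e ∈ G.edgeSet, DiffAt φ e c} := by
  induction h with
  | @single V G h =>
    obtain ⟨v, hv⟩ := h
    haveI : Nonempty _ := ⟨v⟩
    refine ⟨⟨fun a b => by rw [hv a, hv b]⟩, 0, fun _ => Fin.elim0, ?_, ?_, ?_⟩
    · exact fun a b _ => (hv a).trans (hv b).symm
    · intro x y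
      have hxy : x = y := (hv x).trans (hv y).symm
      subst hxy
      rw [SimpleGraph.dist_self]
      have : (Fin.elim0 : Fin 0 → Bool) = Fin.elim0 := rfl
      exact hammingDist_self _
    · haveI : IsEmpty {c : Fin 0 // ∃ e ∈ G.edgeSet,
          DiffAt (fun _ : V => (Fin.elim0 : Fin 0 → Bool)) e c} := ⟨fun c => c.1.elim0⟩
      exact (Nat.card_of_isEmpty).symm
  | @expand V' W' G' H' n' hG hH ih =>
    obtain ⟨hconn, d, φ, hinj, hdist, hcard⟩ := ih
    obtain ⟨hHconn, ψ, hψinj, hψdist, hψcard⟩ := expansion_step hH hconn hinj hdist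
    exact ⟨hHconn, d + 1, ψ, hψinj, hψdist, by omega⟩

/-- Every sequence of expansions producing a partial cube `H` from the
one-vertex graph `K₁` has the same length, namely the number of `Θ`-classes
of `H`. -/
theorem length_of_expansion_sequence_eq_card_thetaClasses {V : Type}
    (H : SimpleGraph V) (hH : IsPartialCube H) (n : ℕ)
    (hn : ObtainableByExpansionsIn H n) :
    n = Nat.card {C : Set (Sym2 V) // IsThetaClass H C} := by
  obtain ⟨_, d, φ, hinj, hdist, hcard⟩ := obtainable_struct hn
  rw [hcard, theta_card_eq hdist]
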